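/- arXiv:1707.08748 — 9 statements merged into one kernel-verified Lean document; each statement's English description precedes it below -/
import Mathlib

section
/- There exist ε-Nash equilibria that are not δ^ε-tolerant equilibria: in Prisoner's Dilemma with payoffs a=b-c for (C,C), 0 for (D,D), b for defecting against a cooperator, and -c for cooperating against a defector (b > c > 0), for any ε with 0 < ε < c, there is δ > 0 such that both players playing δC + (1-δ)D is an ε-Nash equilibrium, but it is not a δ^ε-tolerant equilibrium since C is not an ε-best response. -/
/-- Payoff to a player in the (cost/benefit) Prisoner's Dilemma; `true` is Cooperate,
first argument is the player's own action, second the opponent's. -/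
def pdPay (b c : ℝ) : Bool → Bool → ℝ
  | true, true => b - c
  | true, false => -c
  | false, true => b
  | false, false => 0

/-- Expected payoff of the pure action `s` against an opponent who cooperates
with probability `q`. -/
def pdEP (b c : ℝ) (s : Bool) (q : ℝ) : ℝ :=
  q * pdPay b c s true + (1 - q) * pdPay b c s false

/-- Expected payoff when the player cooperates with probability `p` and the
opponent with probability `q`. -/
def pdE (b c : ℝ) (p q : ℝ) : ℝ :=
  p * pdEP b c true q + (1 - p) * pdEP b c false q

/-- There are ε-Nash equilibria that are not δ^ε-tolerant equilibria: for any
0 < ε < c, some symmetric profile δC + (1-δ)D with δ > 0 is an ε-Nash equilibrium,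
yet C (which is in its support) is not an ε-best response. -/
theorem epsNash_not_deltaEps_tolerant (b c ε : ℝ) (hc : 0 < c) (hb : c < b)
    (hε : 0 < ε) (hεc : ε < c) :
    ∃ δ : ℝ, 0 < δ ∧ δ ≤ 1 ∧
      (∀ s : Bool, pdEP b c s δ ≤ pdE b c δ δ + ε) ∧
      ¬ (∀ s : Bool, 0 < (if s then δ else 1 - δ) →
          ∀ s' : Bool, pdEP b c s' δ ≤ pdEP b c s δ + ε) := by
  refine ⟨ε / c, div_pos hε hc, le_of_lt ((div_lt_one hc).mpr hεc), ?_, ?_⟩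
  · intro s
    have h1 : ε / c * c = ε := div_mul_cancel₀ ε hc.ne'
    cases s <;> simp [pdEP, pdE, pdPay] <;> nlinarith [div_pos hε hc, (div_lt_one hc).mpr hεc]
  · intro h
    have := h true (div_pos hε hc) false
    simp [pdEP, pdPay] at this
    nlinarith
end

section
/- If the profile π' of tolerance distributions stochastically dominates π (i.e., F^{π'_i}(t) ≤ F^{π_i}(t) for all players i and all t, where F denotes the cumulative distribution function), then every π-tolerant equilibrium is also a π'-tolerant equilibrium. -/
open Finset

/-- A mixed strategy over a finite pure-strategy set: nonnegative weights summing to 1. -/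
def IsMixed {α : Type*} [Fintype α] (p : α → ℝ) : Prop :=
  (∀ a, 0 ≤ p a) ∧ ∑ a, p a = 1

/-- The point-mass (pure) strategy on `a`. -/
def pureStrat {α : Type*} [DecidableEq α] (a : α) : α → ℝ :=
  fun b => if b = a then 1 else 0

/-- Expected utility of a utility function `u` under the mixed profile `σ`. -/
def expU {n : ℕ} {S : Fin n → Type*} [∀ i, Fintype (S i)]
    (u : (∀ j, S j) → ℝ) (σ : ∀ j, S j → ℝ) : ℝ :=
  ∑ s : (∀ j, S j), (∏ j, σ j (s j)) * u s

/-- Expected utility when player `i` deviates to the pure strategy `si`,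
while the others follow `σ`. -/
def devU {n : ℕ} {S : Fin n → Type*} [∀ i, Fintype (S i)] [∀ i, DecidableEq (S i)]
    (u : (∀ j, S j) → ℝ) (σ : ∀ j, S j → ℝ) (i : Fin n) (si : S i) : ℝ :=
  expU u (Function.update σ i (pureStrat si))

/-- `si` is consistent with tolerance `t` for player `i` and the profile `σ₋ᵢ`:
it is a `t`-best response to what the others are doing. -/
def Consistent {n : ℕ} {S : Fin n → Type*} [∀ i, Fintype (S i)] [∀ i, DecidableEq (S i)]
    (u : (∀ j, S j) → ℝ) (σ : ∀ j, S j → ℝ) (i : Fin n) (t : ℝ) (si : S i) : Prop :=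
  ∀ si', devU u σ i si' ≤ devU u σ i si + t

/-- Nash equilibrium: every pure strategy in the support of `σ i` is a best response. -/
def NashEq {n : ℕ} {S : Fin n → Type*} [∀ i, Fintype (S i)] [∀ i, DecidableEq (S i)]
    (u : Fin n → (∀ j, S j) → ℝ) (σ : ∀ j, S j → ℝ) : Prop :=
  (∀ i, IsMixed (σ i)) ∧
  ∀ i, ∀ si, 0 < σ i si → ∀ si', devU (u i) σ i si' ≤ devU (u i) σ i si

/-- `p` is a probability distribution on the finite set `T`. -/
def IsDist (T : Finset ℝ) (p : ℝ → ℝ) : Prop :=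
  (∀ t ∈ T, 0 ≤ p t) ∧ ∑ t ∈ T, p t = 1

/-- π-tolerant equilibrium: for each player `i` there is a map `g` assigning to each
tolerance type `t ∈ T i` a mixed strategy whose support consists of `t`-best responses
to `σ₋ᵢ` (E1), such that the π-average of the `g t` is `σ i` (E2). -/
def PiTolerantEq {n : ℕ} {S : Fin n → Type*} [∀ i, Fintype (S i)] [∀ i, DecidableEq (S i)]
    (u : Fin n → (∀ j, S j) → ℝ) (T : Fin n → Finset ℝ) (π : Fin n → ℝ → ℝ)
    (σ : ∀ j, S j → ℝ) : Prop :=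
  (∀ i, IsMixed (σ i)) ∧
  ∀ i, ∃ g : ℝ → S i → ℝ,
    (∀ t ∈ T i, IsMixed (g t)) ∧
    (∀ t ∈ T i, ∀ si, 0 < g t si → Consistent (u i) σ i t si) ∧
    (∀ si, ∑ t ∈ T i, π i t * g t si = σ i si)

/-- Cumulative distribution function of the distribution `p` on the finite set `T`. -/
noncomputable def cdf (T : Finset ℝ) (p : ℝ → ℝ) (t : ℝ) : ℝ :=
  ∑ t' ∈ T.filter (· ≤ t), p t'


/-- Submodularity of `min` on ℝ. -/
lemma min_submod_aux (a b c d : ℝ) (hab : a ≤ b) (hcd : c ≤ d) :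
    min b c + min a d ≤ min a c + min b d := by
  simp only [min_def]
  split_ifs <;> linarith

/-- Telescoping identity for truncated CDF sums. -/
lemma sum_min_cdf (x : ℝ) (hx : 0 ≤ x) (T : Finset ℝ) (p : ℝ → ℝ) :
    (∀ t ∈ T, 0 ≤ p t) →
    ∑ t ∈ T, (min x (∑ s ∈ T.filter (· ≤ t), p s) - min x (∑ s ∈ T.filter (· < t), p s))
      = min x (∑ t ∈ T, p t) := by
  induction T using Finset.induction_on_max with
  | empty => intro _; simp [min_eq_right hx]
  | insert a s ha ih =>
    intro hp
    have hps : ∀ t ∈ s, 0 ≤ p t := fun t ht => hp t (Finset.mem_insert_of_mem ht)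
    have hane : a ∉ s := fun h => lt_irrefl a (ha a h)
    have hfle : (insert a s).filter (· ≤ a) = insert a s := by
      apply Finset.filter_true_of_mem
      intro t ht
      rcases Finset.mem_insert.mp ht with rfl | h
      · exact le_refl t
      · exact (ha t h).le
    have hflt : (insert a s).filter (· < a) = s := by
      ext t
      simp only [Finset.mem_filter, Finset.mem_insert]
      constructor
      · rintro ⟨rfl | h, hlt⟩
        · exact absurd hlt (lt_irrefl t)
        · exact h
      · intro h
        exact ⟨Or.inr h, ha t h⟩
    have hrest : ∀ t ∈ s,
        (min x (∑ s' ∈ (insert a s).filter (· ≤ t), p s')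
          - min x (∑ s' ∈ (insert a s).filter (· < t), p s'))
        = (min x (∑ s' ∈ s.filter (· ≤ t), p s')
          - min x (∑ s' ∈ s.filter (· < t), p s')) := by
      intro t ht
      have h1 : (insert a s).filter (· ≤ t) = s.filter (· ≤ t) := by
        rw [Finset.filter_insert, if_neg (not_le.mpr (ha t ht))]
      have h2 : (insert a s).filter (· < t) = s.filter (· < t) := by
        rw [Finset.filter_insert, if_neg (not_lt.mpr (ha t ht).le)]
      rw [h1, h2]
    rw [Finset.sum_insert hane, Finset.sum_congr rfl hrest, ih hps, hfle, hflt,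
      Finset.sum_insert hane]
    ring

/-- If π' stochastically dominates π, then every π-tolerant equilibrium is a
π'-tolerant equilibrium. -/
theorem stochDom_piTolerant {n : ℕ} {S : Fin n → Type*}
    [∀ i, Fintype (S i)] [∀ i, DecidableEq (S i)]
    (u : Fin n → (∀ j, S j) → ℝ) (σ : ∀ j, S j → ℝ)
    (T T' : Fin n → Finset ℝ) (π π' : Fin n → ℝ → ℝ)
    (hT : ∀ i, (T i).Nonempty) (hT' : ∀ i, (T' i).Nonempty)
    (hTnonneg : ∀ i, ∀ t ∈ T i, 0 ≤ t) (hT'nonneg : ∀ i, ∀ t ∈ T' i, 0 ≤ t)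
    (hπ : ∀ i, IsDist (T i) (π i)) (hπ' : ∀ i, IsDist (T' i) (π' i))
    (hDom : ∀ i, ∀ t : ℝ, cdf (T' i) (π' i) t ≤ cdf (T i) (π i) t)
    (hEq : PiTolerantEq u T π σ) :
    PiTolerantEq u T' π' σ := by
  classical
  obtain ⟨hmix, hg⟩ := hEq
  refine ⟨hmix, fun i => ?_⟩
  obtain ⟨g, hgmix, hgcons, hgavg⟩ := hg i
  have hne : Nonempty (S i) := by
    rcases isEmpty_or_nonempty (S i) with h | h
    · exfalso
      have h2 := (hmix i).2
      simp [Finset.univ_eq_empty] at h2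
    · exact h
  obtain ⟨sm, -, hsm⟩ := Finset.exists_max_image Finset.univ (devU (u i) σ i) Finset.univ_nonempty
  set F : ℝ → ℝ := fun t => ∑ s' ∈ (T i).filter (· ≤ t), π i s' with hF
  set A : ℝ → ℝ := fun t => ∑ s' ∈ (T i).filter (· < t), π i s' with hA
  set F' : ℝ → ℝ := fun t => ∑ s' ∈ (T' i).filter (· ≤ t), π' i s' with hF'
  set A' : ℝ → ℝ := fun t => ∑ s' ∈ (T' i).filter (· < t), π' i s' with hA'
  set w : ℝ → ℝ → ℝ := fun t t' =>
    min (F t) (F' t') - min (F t) (A' t') - (min (A t) (F' t') - min (A t) (A' t')) with hw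
  have hπn : ∀ t ∈ T i, 0 ≤ π i t := (hπ i).1
  have hπ'n : ∀ t ∈ T' i, 0 ≤ π' i t := (hπ' i).1
  have hAF : ∀ t, A t ≤ F t := fun t =>
    Finset.sum_le_sum_of_subset_of_nonneg
      (Finset.monotone_filter_right _ (fun x _ hx => le_of_lt hx))
      (fun x hx _ => hπn x (Finset.mem_of_mem_filter x hx))
  have hA'F' : ∀ t, A' t ≤ F' t := fun t =>
    Finset.sum_le_sum_of_subset_of_nonneg
      (Finset.monotone_filter_right _ (fun x _ hx => le_of_lt hx))
      (fun x hx _ => hπ'n x (Finset.mem_of_mem_filter x hx))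
  have hFle1 : ∀ t, F t ≤ 1 := by
    intro t
    rw [← (hπ i).2]
    exact Finset.sum_le_sum_of_subset_of_nonneg (Finset.filter_subset _ _)
      (fun x hx _ => hπn x hx)
  have hAle1 : ∀ t, A t ≤ 1 := fun t => le_trans (hAF t) (hFle1 t)
  have hF'le1 : ∀ t, F' t ≤ 1 := by
    intro t
    rw [← (hπ' i).2]
    exact Finset.sum_le_sum_of_subset_of_nonneg (Finset.filter_subset _ _)
      (fun x hx _ => hπ'n x hx)
  have hA'le1 : ∀ t, A' t ≤ 1 := fun t => le_trans (hA'F' t) (hF'le1 t)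
  have hFnn : ∀ t, 0 ≤ F t := fun t =>
    Finset.sum_nonneg (fun x hx => hπn x (Finset.mem_of_mem_filter x hx))
  have hAnn : ∀ t, 0 ≤ A t := fun t =>
    Finset.sum_nonneg (fun x hx => hπn x (Finset.mem_of_mem_filter x hx))
  have hF'nn : ∀ t, 0 ≤ F' t := fun t =>
    Finset.sum_nonneg (fun x hx => hπ'n x (Finset.mem_of_mem_filter x hx))
  have hA'nn : ∀ t, 0 ≤ A' t := fun t =>
    Finset.sum_nonneg (fun x hx => hπ'n x (Finset.mem_of_mem_filter x hx))
  have hFA : ∀ t ∈ T i, F t = π i t + A t := by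
    intro t ht
    have hins : (T i).filter (· ≤ t) = insert t ((T i).filter (· < t)) := by
      ext x
      simp only [Finset.mem_filter, Finset.mem_insert]
      constructor
      · rintro ⟨hx, hle⟩
        rcases lt_or_eq_of_le hle with h | h
        · exact Or.inr ⟨hx, h⟩
        · exact Or.inl h
      · rintro (rfl | ⟨hx, hlt⟩)
        · exact ⟨ht, le_refl x⟩
        · exact ⟨hx, hlt.le⟩
    have hnm : t ∉ (T i).filter (· < t) := by
      simp [Finset.mem_filter]
    rw [hF, hA]
    simp only
    rw [hins, Finset.sum_insert hnm]
  have hF'A' : ∀ t ∈ T' i, F' t = π' i t + A' t := by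
    intro t ht
    have hins : (T' i).filter (· ≤ t) = insert t ((T' i).filter (· < t)) := by
      ext x
      simp only [Finset.mem_filter, Finset.mem_insert]
      constructor
      · rintro ⟨hx, hle⟩
        rcases lt_or_eq_of_le hle with h | h
        · exact Or.inr ⟨hx, h⟩
        · exact Or.inl h
      · rintro (rfl | ⟨hx, hlt⟩)
        · exact ⟨ht, le_refl x⟩
        · exact ⟨hx, hlt.le⟩
    have hnm : t ∉ (T' i).filter (· < t) := by
      simp [Finset.mem_filter]
    rw [hF', hA']
    simp only
    rw [hins, Finset.sum_insert hnm]
  have hw_nonneg : ∀ t t', 0 ≤ w t t' := by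
    intro t t'
    have := min_submod_aux (A t) (F t) (A' t') (F' t') (hAF t) (hA'F' t')
    simp only [hw]
    linarith
  have hw_zero : ∀ t ∈ T i, ∀ t', t' < t → w t t' = 0 := by
    intro t ht t' hlt
    have hdom : F' t' ≤ A t := by
      refine le_trans (hDom i t') ?_
      exact Finset.sum_le_sum_of_subset_of_nonneg
        (Finset.monotone_filter_right _ (fun x _ hx => lt_of_le_of_lt hx hlt))
        (fun x hx _ => hπn x (Finset.mem_of_mem_filter x hx))
    have h1 : F' t' ≤ F t := le_trans hdom (hAF t)
    have h2 : A' t' ≤ F t := le_trans (hA'F' t') h1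
    have h3 : A' t' ≤ A t := le_trans (hA'F' t') hdom
    simp only [hw]
    rw [min_eq_right h1, min_eq_right h2, min_eq_right hdom, min_eq_right h3]
    ring
  have hrow : ∀ t ∈ T i, ∑ t' ∈ T' i, w t t' = π i t := by
    intro t ht
    have e1 := sum_min_cdf (F t) (hFnn t) (T' i) (π' i) hπ'n
    have e2 := sum_min_cdf (A t) (hAnn t) (T' i) (π' i) hπ'n
    rw [(hπ' i).2] at e1 e2
    have hsplit : ∑ t' ∈ T' i, w t t'
        = ∑ t' ∈ T' i, (min (F t) (F' t') - min (F t) (A' t'))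
          - ∑ t' ∈ T' i, (min (A t) (F' t') - min (A t) (A' t')) := by
      rw [← Finset.sum_sub_distrib]
    rw [hsplit, e1, e2, min_eq_left (hFle1 t), min_eq_left (hAle1 t)]
    have := hFA t ht
    linarith
  have hcol : ∀ t' ∈ T' i, ∑ t ∈ T i, w t t' = π' i t' := by
    intro t' ht'
    have e1 := sum_min_cdf (F' t') (hF'nn t') (T i) (π i) hπn
    have e2 := sum_min_cdf (A' t') (hA'nn t') (T i) (π i) hπn
    rw [(hπ i).2] at e1 e2
    have hsw : ∀ t ∈ T i, w t t'
        = (min (F' t') (F t) - min (F' t') (A t))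
          - ((min (A' t') (F t)) - min (A' t') (A t)) := by
      intro t _
      simp only [hw]
      rw [min_comm (F t) (F' t'), min_comm (F t) (A' t'), min_comm (A t) (F' t'),
        min_comm (A t) (A' t')]
      ring
    rw [Finset.sum_congr rfl hsw, Finset.sum_sub_distrib, e1, e2,
      min_eq_left (hF'le1 t'), min_eq_left (hA'le1 t')]
    have := hF'A' t' ht'
    linarith
  refine ⟨fun t' si => if π' i t' = 0 then pureStrat sm si
      else (∑ t ∈ T i, w t t' * g t si) / π' i t', ?_, ?_, ?_⟩
  · intro t' ht'
    by_cases h : π' i t' = 0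
    · constructor
      · intro a
        simp only [h, if_true]
        unfold pureStrat
        split_ifs <;> norm_num
      · simp only [h, if_true]
        simp [pureStrat]
    · have hpos : 0 < π' i t' := lt_of_le_of_ne (hπ'n t' ht') (Ne.symm h)
      constructor
      · intro a
        simp only [h, if_false]
        apply div_nonneg _ hpos.le
        apply Finset.sum_nonneg
        intro t ht
        exact mul_nonneg (hw_nonneg t t') ((hgmix t ht).1 a)
      · simp only [h, if_false]
        rw [← Finset.sum_div, Finset.sum_comm]
        have hst : ∀ t ∈ T i, ∑ si, w t t' * g t si = w t t' := by
          intro t ht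
          rw [← Finset.mul_sum, (hgmix t ht).2, mul_one]
        rw [Finset.sum_congr rfl hst, hcol t' ht', div_self h]
  · intro t' ht' si hpos
    have ht'nn : 0 ≤ t' := hT'nonneg i t' ht'
    by_cases h : π' i t' = 0
    · simp only [h, if_true] at hpos
      have hsieq : si = sm := by
        by_contra hne'
        simp [pureStrat, hne'] at hpos
      subst hsieq
      intro si'
      exact le_trans (hsm si' (Finset.mem_univ si')) (le_add_of_nonneg_right ht'nn)
    · simp only [h, if_false] at hpos
      have hπpos : 0 < π' i t' := lt_of_le_of_ne (hπ'n t' ht') (Ne.symm h)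
      have hsum : 0 < ∑ t ∈ T i, w t t' * g t si := by
        by_contra hc
        push_neg at hc
        rcases div_pos_iff.mp hpos with ⟨h1, _⟩ | ⟨_, h2⟩
        · linarith
        · linarith
      obtain ⟨t, ht, htpos⟩ : ∃ t ∈ T i, 0 < w t t' * g t si := by
        by_contra hc
        push_neg at hc
        have : ∑ t ∈ T i, w t t' * g t si ≤ 0 := Finset.sum_nonpos hc
        linarith
      have hgpos : 0 < g t si := by
        rcases lt_or_eq_of_le ((hgmix t ht).1 si) with h1 | h1
        · exact h1
        · exfalso; rw [← h1, mul_zero] at htpos; exact lt_irrefl 0 htpos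
      have hwpos : 0 < w t t' := by
        rcases lt_or_eq_of_le (hw_nonneg t t') with h1 | h1
        · exact h1
        · exfalso; rw [← h1, zero_mul] at htpos; exact lt_irrefl 0 htpos
      have htle : t ≤ t' := by
        by_contra hc
        push_neg at hc
        rw [hw_zero t ht t' hc] at hwpos
        exact lt_irrefl 0 hwpos
      intro si'
      exact le_trans (hgcons t ht si hgpos si') (by linarith)
  · intro si
    have key : ∀ t' ∈ T' i,
        π' i t' * (if π' i t' = 0 then pureStrat sm si
          else (∑ t ∈ T i, w t t' * g t si) / π' i t')
        = ∑ t ∈ T i, w t t' * g t si := by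
      intro t' ht'
      by_cases h : π' i t' = 0
      · simp only [h, if_true, zero_mul]
        symm
        apply Finset.sum_eq_zero
        intro t ht
        have hw0 : w t t' = 0 := by
          have hz : ∑ t ∈ T i, w t t' = 0 := by rw [hcol t' ht', h]
          exact (Finset.sum_eq_zero_iff_of_nonneg
            (fun x _ => hw_nonneg x t')).mp hz t ht
        rw [hw0, zero_mul]
      · simp only [h, if_false]
        rw [mul_comm, div_mul_cancel₀ _ h]
    calc ∑ t' ∈ T' i, π' i t' * (if π' i t' = 0 then pureStrat sm si
          else (∑ t ∈ T i, w t t' * g t si) / π' i t')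
        = ∑ t' ∈ T' i, ∑ t ∈ T i, w t t' * g t si := Finset.sum_congr rfl key
      _ = ∑ t ∈ T i, ∑ t' ∈ T' i, w t t' * g t si := Finset.sum_comm
      _ = ∑ t ∈ T i, π i t * g t si := by
          refine Finset.sum_congr rfl (fun t ht => ?_)
          rw [← Finset.sum_mul, hrow t ht]
      _ = σ i si := hgavg si
end

section
/- In the Traveler's Dilemma with claims in {L, L+1, ..., H} (integers L < H) and bonus/penalty b ≥ 1, cooperation (claiming H) is consistent with tolerance t against any mixed strategy of the other player whenever t ≥ 2b - 1. -/
open Finset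

/-- Payoff in the Traveler's Dilemma, with bonus/penalty `b`, to a player claiming `m`
against an opponent claiming `m'`. -/
def tdPay (b m m' : ℤ) : ℝ :=
  if m = m' then (m : ℝ) else if m < m' then (m : ℝ) + (b : ℝ) else (m' : ℝ) - (b : ℝ)

/-- In the Traveler's Dilemma with claims in `[L,H]` and bonus `b ≥ 1`, cooperation
(claiming `H`) is consistent with tolerance `t` against any mixed strategy of the
other player whenever `t ≥ 2b - 1`. -/
theorem td_cooperation_consistent_of_ge (L H b : ℤ) (t : ℝ)
    (hLH : L < H) (hb : 1 ≤ b)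
    (σ : ℤ → ℝ) (hσ0 : ∀ m ∈ Finset.Icc L H, 0 ≤ σ m)
    (hσ1 : ∑ m ∈ Finset.Icc L H, σ m = 1)
    (ht : 2 * (b : ℝ) - 1 ≤ t) :
    ∀ m ∈ Finset.Icc L H,
      ∑ m' ∈ Finset.Icc L H, σ m' * tdPay b m m' ≤
        (∑ m' ∈ Finset.Icc L H, σ m' * tdPay b H m') + t := by
  intro m hm
  simp only [Finset.mem_Icc] at hm
  have key : ∀ m' ∈ Finset.Icc L H,
      σ m' * tdPay b m m' ≤ σ m' * tdPay b H m' + σ m' * (2 * (b : ℝ) - 1) := by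
    intro m' hm'
    simp only [Finset.mem_Icc] at hm'
    have hb' : (1 : ℝ) ≤ (b : ℝ) := by exact_mod_cast hb
    have hσ : 0 ≤ σ m' := hσ0 m' (by simp [Finset.mem_Icc, hm'.1, hm'.2])
    have hpt : tdPay b m m' ≤ tdPay b H m' + (2 * (b : ℝ) - 1) := by
      unfold tdPay
      split_ifs <;>
        first
        | (exfalso; omega)
        | (push_cast
           first
           | linarith [show (m : ℝ) + 1 ≤ m' from by
               exact_mod_cast Int.add_one_le_iff.mpr ‹m < m'›]
           | linarith [show (m : ℝ) ≤ H from by exact_mod_cast hm.2,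
               show (m' : ℝ) ≤ H from by exact_mod_cast hm'.2,
               show (m : ℝ) = m' from by exact_mod_cast ‹m = m'›]
           | linarith [show (m : ℝ) ≤ H from by exact_mod_cast hm.2,
               show (m' : ℝ) ≤ H from by exact_mod_cast hm'.2])
    nlinarith [mul_le_mul_of_nonneg_left hpt hσ]
  calc ∑ m' ∈ Finset.Icc L H, σ m' * tdPay b m m'
      ≤ ∑ m' ∈ Finset.Icc L H, (σ m' * tdPay b H m' + σ m' * (2 * (b : ℝ) - 1)) :=
        Finset.sum_le_sum key
    _ = (∑ m' ∈ Finset.Icc L H, σ m' * tdPay b H m') + (∑ m' ∈ Finset.Icc L H, σ m') * (2 * (b : ℝ) - 1) := by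
        rw [Finset.sum_add_distrib, Finset.sum_mul]
    _ ≤ (∑ m' ∈ Finset.Icc L H, σ m' * tdPay b H m') + t := by
        rw [hσ1, one_mul]; linarith
end

section
/- In the Traveler's Dilemma, cooperation (claiming H) is consistent with type (t, β) — i.e., against an opponent who claims H with probability β and L with probability 1-β — if and only if t ≥ max(β(b-1), b - β(H-L)). -/
/-- Expected payoff of claiming `m` against an opponent who claims `H` with
probability `β` and `L` with probability `1 - β`. -/
def tdBeliefEP (L H b : ℤ) (β : ℝ) (m : ℤ) : ℝ :=
  β * tdPay b m H + (1 - β) * tdPay b m L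

/-- In the Traveler's Dilemma, cooperation (claiming `H`) is consistent with type
`(t, β)` iff `t ≥ max(β(b-1), b - β(H-L))`. -/
theorem td_type_consistent_iff (L H b : ℤ) (t β : ℝ)
    (hLH : L < H) (hb : 1 ≤ b) (hβ0 : 0 ≤ β) (hβ1 : β ≤ 1) :
    (∀ m ∈ Finset.Icc L H, tdBeliefEP L H b β m ≤ tdBeliefEP L H b β H + t) ↔
      max (β * ((b : ℝ) - 1)) ((b : ℝ) - β * ((H : ℝ) - (L : ℝ))) ≤ t := by
  have hb' : (1:ℝ) ≤ (b:ℝ) := by exact_mod_cast hb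
  have hLH' : (L:ℝ) < (H:ℝ) := by exact_mod_cast hLH
  have hEPH : tdBeliefEP L H b β H = β * (H:ℝ) + (1-β) * ((L:ℝ) - (b:ℝ)) := by
    simp [tdBeliefEP, tdPay, hLH.ne', not_lt.mpr hLH.le]
  have hEPL : tdBeliefEP L H b β L = β * ((L:ℝ) + (b:ℝ)) + (1-β) * (L:ℝ) := by
    simp [tdBeliefEP, tdPay, hLH.ne, hLH]
  have hEPm : ∀ m : ℤ, L < m → m < H →
      tdBeliefEP L H b β m = β * ((m:ℝ) + (b:ℝ)) + (1-β) * ((L:ℝ) - (b:ℝ)) := by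
    intro m h1 h2
    have h3 : ¬ m < L := by omega
    simp [tdBeliefEP, tdPay, h2.ne, h2, h1.ne', h3]
  constructor
  · intro h
    have hL := h L (Finset.mem_Icc.mpr ⟨le_refl _, hLH.le⟩)
    rw [hEPL, hEPH] at hL
    rw [max_le_iff]
    refine ⟨?_, by nlinarith⟩
    by_cases hc : L < H - 1
    · have h1 := h (H-1) (Finset.mem_Icc.mpr ⟨by omega, by omega⟩)
      rw [hEPm (H-1) (by omega) (by omega), hEPH] at h1
      push_cast at h1
      nlinarith
    · have hH1 : (H:ℝ) = (L:ℝ) + 1 := by exact_mod_cast (by omega : H = L + 1)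
      nlinarith [mul_nonneg (sub_nonneg.mpr hβ1) (by linarith : (0:ℝ) ≤ (b:ℝ))]
  · intro h m hm
    rw [Finset.mem_Icc] at hm
    rw [max_le_iff] at h
    obtain ⟨h1, h2⟩ := h
    have ht0 : 0 ≤ t := le_trans (mul_nonneg hβ0 (by linarith)) h1
    by_cases hmH : m = H
    · subst hmH; linarith
    by_cases hmL : m = L
    · subst hmL; rw [hEPL, hEPH]; nlinarith
    · rw [hEPm m (by omega) (by omega), hEPH]
      have hm' : (m:ℝ) ≤ (H:ℝ) - 1 := by
        have : m ≤ H - 1 := by omega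
        have : ((m:ℝ)) ≤ ((H - 1 : ℤ) : ℝ) := by exact_mod_cast this
        push_cast at this; linarith
      nlinarith [mul_nonneg hβ0 (by linarith : (0:ℝ) ≤ (H:ℝ) - 1 - (m:ℝ))]
end

section
/- In the Public Goods game with N ≥ 2 players, endowment 1, and marginal return ρ ∈ (1/N, 1), cooperation (contributing the full endowment) is consistent with tolerance t against any strategies of the other players if and only if t ≥ 1 - ρ. -/
open Finset

/-- Payoff to player `i` in the Public Goods game with marginal return `ρ`, when `i`
contributes `xi` and the others contribute according to `x`. -/
def pgPay {N : ℕ} (ρ : ℝ) (i : Fin N) (xi : ℝ) (x : Fin N → ℝ) : ℝ :=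
  1 - xi + ρ * (xi + ∑ j ∈ Finset.univ.erase i, x j)

/-- In the Public Goods game with `N ≥ 2` players and marginal return `ρ ∈ (1/N, 1)`,
cooperation (contributing the full endowment 1) is consistent with tolerance `t`,
against any strategies of the other players, iff `t ≥ 1 - ρ`. -/
theorem pg_cooperation_consistent_iff (N : ℕ) (hN : 2 ≤ N) (ρ t : ℝ)
    (hρ1 : 1 / (N : ℝ) < ρ) (hρ2 : ρ < 1)
    (i : Fin N) (x : Fin N → ℝ) (hx : ∀ j, 0 ≤ x j ∧ x j ≤ 1) :
    (∀ x' : ℝ, 0 ≤ x' → x' ≤ 1 → pgPay ρ i x' x ≤ pgPay ρ i 1 x + t) ↔ 1 - ρ ≤ t := by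
  constructor
  · intro h
    have h0 := h 0 le_rfl zero_le_one
    simp only [pgPay] at h0
    linarith
  · intro ht x' hx0 hx1
    simp only [pgPay]
    nlinarith
end

section
/- In Bertrand Competition with n players, prices in {L,...,H} with 2 ≤ L < H, cooperation (pricing at H) is consistent with type (t,β) if and only if t ≥ max(β^{n-1}(H-1), f(n)·L) - β^{n-1}·H/n, where f(n) = Σ_{k=0}^{n-1} β^k (1-β)^{n-1-k} C(n-1,k)/(n-k). -/
open Finset

/-- The quantity `f(n) = Σ_{k=0}^{n-1} β^k (1-β)^{n-1-k} C(n-1,k)/(n-k)`: the expected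
share factor from pricing at the floor `L` when each of the `n-1` other firms
independently prices high with probability `β` and at `L`
with probability `1-β`. -/
noncomputable def bertF (n : ℕ) (β : ℝ) : ℝ :=
  ∑ k ∈ Finset.range n, β ^ k * (1 - β) ^ (n - 1 - k) * ((n - 1).choose k : ℝ) / ((n : ℝ) - (k : ℝ))

/-- Expected payoff in Bertrand Competition from pricing at `p ∈ [L,H]`, against `n-1`
other firms that each independently price at `H` with probability `β` and at `L`
with probability `1-β`. -/
noncomputable def bertEP (n L H : ℕ) (β : ℝ) (p : ℕ) : ℝ :=
  if p = L then bertF n β * (L : ℝ)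
  else if p = H then β ^ (n - 1) * (H : ℝ) / (n : ℝ)
  else β ^ (n - 1) * (p : ℝ)

lemma bertF_ge_pow (n : ℕ) (β : ℝ) (hn : 1 ≤ n) (hβ0 : 0 ≤ β) (hβ1 : β ≤ 1) :
    β ^ (n - 1) ≤ bertF n β := by
  have h1β : (0:ℝ) ≤ 1 - β := by linarith
  have hterm : ∀ k ∈ Finset.range n,
      0 ≤ β ^ k * (1 - β) ^ (n - 1 - k) * ((n - 1).choose k : ℝ) / ((n : ℝ) - (k : ℝ)) := by
    intro k hk
    have hkn : k < n := Finset.mem_range.mp hk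
    have : (k:ℝ) < (n:ℝ) := by exact_mod_cast hkn
    apply div_nonneg
    · positivity
    · linarith
  have hmem : n - 1 ∈ Finset.range n := Finset.mem_range.mpr (by omega)
  have := Finset.single_le_sum hterm hmem
  have heq : β ^ (n-1) * (1 - β) ^ (n - 1 - (n-1)) * ((n - 1).choose (n-1) : ℝ)
      / ((n : ℝ) - ((n-1 : ℕ) : ℝ)) = β ^ (n-1) := by
    have h1 : n - 1 - (n - 1) = 0 := by omega
    have h2 : ((n-1:ℕ):ℝ) = (n:ℝ) - 1 := by
      push_cast [Nat.cast_sub hn]; ring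
    rw [h1, h2, Nat.choose_self]
    norm_num
  rw [heq] at this
  exact this

/-- In Bertrand Competition with `n ≥ 2` players and prices in `{L,...,H}`, `2 ≤ L < H`,
cooperation (pricing at `H`) is consistent with type `(t,β)` iff
`t ≥ max(β^{n-1}(H-1), f(n)·L) - β^{n-1}·H/n`. -/
theorem bertrand_cooperation_consistent_iff (n L H : ℕ) (t β : ℝ)
    (hn : 2 ≤ n) (hL : 2 ≤ L) (hLH : L < H) (hβ0 : 0 ≤ β) (hβ1 : β ≤ 1) :
    (∀ p ∈ Finset.Icc L H, bertEP n L H β p ≤ bertEP n L H β H + t) ↔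
      max (β ^ (n - 1) * ((H : ℝ) - 1)) (bertF n β * (L : ℝ))
        - β ^ (n - 1) * (H : ℝ) / (n : ℝ) ≤ t := by
  have hHL : H ≠ L := by omega
  have hEPH : bertEP n L H β H = β ^ (n - 1) * (H : ℝ) / (n : ℝ) := by
    simp [bertEP, hHL]
  have hEPL : bertEP n L H β L = bertF n β * (L : ℝ) := by simp [bertEP]
  have hpow : (0:ℝ) ≤ β ^ (n-1) := pow_nonneg hβ0 _
  constructor
  · intro h
    have hLmem : L ∈ Finset.Icc L H := Finset.mem_Icc.mpr ⟨le_rfl, hLH.le⟩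
    have hL' : bertF n β * (L : ℝ) ≤ bertEP n L H β H + t := by
      have := h L hLmem; rwa [hEPL] at this
    have hH1 : β ^ (n - 1) * ((H : ℝ) - 1) ≤ bertEP n L H β H + t := by
      rcases eq_or_lt_of_le (Nat.succ_le_of_lt hLH) with hc | hc
      · -- H = L + 1
        have hHL1 : (H:ℝ) - 1 = (L:ℝ) := by
          have : H = L + 1 := by omega
          subst this; push_cast; ring
        rw [hHL1]
        calc β ^ (n-1) * (L:ℝ) ≤ bertF n β * (L:ℝ) := by
              apply mul_le_mul_of_nonneg_right (bertF_ge_pow n β (by omega) hβ0 hβ1)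
              positivity
          _ ≤ _ := hL'
      · -- L + 1 < H, so H - 1 is an interior price
        have hmem : H - 1 ∈ Finset.Icc L H := Finset.mem_Icc.mpr ⟨by omega, by omega⟩
        have := h (H-1) hmem
        have hne1 : H - 1 ≠ L := by omega
        have hne2 : H - 1 ≠ H := by omega
        rw [bertEP, if_neg hne1, if_neg hne2] at this
        have hcast : ((H-1:ℕ):ℝ) = (H:ℝ) - 1 := by
          push_cast [Nat.cast_sub (by omega : 1 ≤ H)]; ring
        rwa [hcast] at this
    rw [hEPH] at hL' hH1
    rw [sub_le_iff_le_add, max_le_iff]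
    constructor <;> linarith
  · intro h p hp
    rw [Finset.mem_Icc] at hp
    rw [hEPH]
    have hkey : bertEP n L H β p ≤ max (β ^ (n - 1) * ((H : ℝ) - 1)) (bertF n β * (L : ℝ)) := by
      by_cases hpL : p = L
      · rw [hpL, hEPL]; exact le_max_right _ _
      · by_cases hpH : p = H
        · rw [hpH, hEPH]
          apply le_trans _ (le_max_left _ _)
          have hH3 : (3:ℝ) ≤ (H:ℝ) := by exact_mod_cast (by omega : 3 ≤ H)
          have hn2 : (2:ℝ) ≤ (n:ℝ) := by exact_mod_cast hn
          rw [div_le_iff₀ (by linarith)]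
          nlinarith [mul_nonneg hpow (by nlinarith : (0:ℝ) ≤ ((H:ℝ)-1)*(n:ℝ) - (H:ℝ))]
        · rw [bertEP, if_neg hpL, if_neg hpH]
          apply le_trans _ (le_max_left _ _)
          apply mul_le_mul_of_nonneg_left _ hpow
          have : p ≤ H - 1 := by omega
          have : (p:ℝ) ≤ (H:ℝ) - 1 := by
            have h' : (p:ℝ) + 1 ≤ (H:ℝ) := by exact_mod_cast (by omega : p + 1 ≤ H)
            linarith
          exact this
    linarith [hkey, sub_le_iff_le_add.mp h]
end

section
/- If ΔC ≤ ΔD, multiple solutions to 1 - α = F(αΔC + (1-α)ΔD) may exist: there exist positive reals ΔC < ΔD and a continuous nondecreasing CDF F : ℝ → [0,1] such that the equation 1 - α = F(αΔC + (1-α)ΔD) has at least two distinct solutions in [0,1]. -/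
/-- When `ΔC ≤ ΔD`, multiple symmetric particularly cooperative equilibria may exist:
there are `0 < ΔC < ΔD` and a continuous nondecreasing CDF `F` for which the equation
`1 - α = F(αΔC + (1-α)ΔD)` has at least two distinct solutions in `[0,1]`. -/
theorem multiple_equilibria_possible :
    ∃ (ΔC ΔD : ℝ) (F : ℝ → ℝ), 0 < ΔC ∧ ΔC < ΔD ∧
      Continuous F ∧ Monotone F ∧ (∀ x, 0 ≤ F x ∧ F x ≤ 1) ∧
      ∃ α β : ℝ, α ∈ Set.Icc (0 : ℝ) 1 ∧ β ∈ Set.Icc (0 : ℝ) 1 ∧ α ≠ β ∧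
        1 - α = F (α * ΔC + (1 - α) * ΔD) ∧ 1 - β = F (β * ΔC + (1 - β) * ΔD) := by
  refine ⟨1, 2, fun x => max 0 (min (x - 1) 1), one_pos, one_lt_two, ?_, ?_, ?_,
    0, 1, ?_, ?_, ?_, ?_, ?_⟩
  · exact continuous_const.max ((continuous_id.sub continuous_const).min continuous_const)
  · intro a b hab
    exact max_le_max le_rfl (min_le_min (by linarith) le_rfl)
  · intro x
    exact ⟨le_max_left _ _, max_le zero_le_one (min_le_right _ _)⟩
  · exact ⟨le_rfl, zero_le_one⟩
  · exact ⟨zero_le_one, le_rfl⟩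
  · exact zero_ne_one
  · norm_num
  · norm_num
end

section
/- Comparative statics in ΔC and ΔD: suppose F is a continuous nondecreasing CDF and ΔC > ΔD > 0, and let α*(ΔC, ΔD) denote the unique solution of 1 - α = F(αΔC + (1-α)ΔD). If ΔC' ≥ ΔC and ΔD' ≥ ΔD with ΔC' > ΔD', then α*(ΔC', ΔD') ≤ α*(ΔC, ΔD). (The equilibrium probability of cooperation decreases as ΔC and ΔD increase.) -/
/-- Comparative statics: the equilibrium probability of cooperation decreases as
`ΔC` and `ΔD` increase. If `α` solves `1 - α = F(αΔC + (1-α)ΔD)` and `α'` solves the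
equation with larger gains `ΔC' ≥ ΔC`, `ΔD' ≥ ΔD` (with `ΔC' > ΔD'`), then `α' ≤ α`. -/
theorem comparative_statics_gains (F : ℝ → ℝ) (ΔC ΔD ΔC' ΔD' α α' : ℝ)
    (hF : Continuous F) (hFmono : Monotone F) (hF01 : ∀ x, 0 ≤ F x ∧ F x ≤ 1)
    (hΔD : 0 < ΔD) (hΔ : ΔD < ΔC) (hC : ΔC ≤ ΔC') (hD : ΔD ≤ ΔD') (hΔ' : ΔD' < ΔC')
    (hα : α ∈ Set.Icc (0 : ℝ) 1) (hα' : α' ∈ Set.Icc (0 : ℝ) 1)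
    (heq : 1 - α = F (α * ΔC + (1 - α) * ΔD))
    (heq' : 1 - α' = F (α' * ΔC' + (1 - α') * ΔD')) :
    α' ≤ α := by
  by_contra h
  push_neg at h
  have harg : α * ΔC + (1 - α) * ΔD ≤ α' * ΔC' + (1 - α') * ΔD' := by
    have h1 : α * ΔC + (1 - α) * ΔD ≤ α' * ΔC + (1 - α') * ΔD := by
      nlinarith [hα.1, hα'.2]
    have h2 : α' * ΔC + (1 - α') * ΔD ≤ α' * ΔC' + (1 - α') * ΔD' := by
      have := hα'.1
      have := hα'.2
      nlinarith
    linarith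
  have := hFmono harg
  linarith
end

section
/- Monotonicity in the tolerance distribution: if F and F' are continuous nondecreasing CDFs with F'(x) ≤ F(x) for all x (i.e., F' stochastically dominates F), ΔC > ΔD > 0, and α*, α*' are the unique solutions of 1 - α = F(αΔC + (1-α)ΔD) and 1 - α = F'(αΔC + (1-α)ΔD) respectively, then α*' ≥ α*. (Greater tolerance yields more cooperation in the symmetric particularly cooperative equilibrium.) -/
/-- Monotonicity in the tolerance distribution: if `F'` stochastically dominates `F`
(i.e., `F' ≤ F` pointwise) and `ΔC > ΔD > 0`, then the equilibrium cooperation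
probability `α*'` under `F'` is at least the one `α*` under `F`. -/
theorem comparative_statics_tolerance (F F' : ℝ → ℝ) (ΔC ΔD α α' : ℝ)
    (hF : Continuous F) (hFmono : Monotone F) (hF01 : ∀ x, 0 ≤ F x ∧ F x ≤ 1)
    (hF' : Continuous F') (hF'mono : Monotone F') (hF'01 : ∀ x, 0 ≤ F' x ∧ F' x ≤ 1)
    (hDom : ∀ x, F' x ≤ F x)
    (hΔD : 0 < ΔD) (hΔ : ΔD < ΔC)
    (hα : α ∈ Set.Icc (0 : ℝ) 1) (hα' : α' ∈ Set.Icc (0 : ℝ) 1)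
    (heq : 1 - α = F (α * ΔC + (1 - α) * ΔD))
    (heq' : 1 - α' = F' (α' * ΔC + (1 - α') * ΔD)) :
    α ≤ α' := by
  by_contra h
  push_neg at h
  have harg : α' * ΔC + (1 - α') * ΔD ≤ α * ΔC + (1 - α) * ΔD := by nlinarith
  have : (1 : ℝ) - α' ≤ 1 - α := by
    rw [heq, heq']
    exact le_trans (hDom _) (le_trans (hFmono harg) le_rfl)
  linarith
end
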